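/- Let κ be a regular uncountable cardinal, S ⊆ κ a stationary set consisting of limit ordinals, and for each δ ∈ S let C_δ ⊆ δ be unbounded in δ. Then there is no function f : κ → κ such that for every δ ∈ S the set {α ∈ C_δ : f(α) ≠ δ} is bounded below δ. -/

import Mathlib

/-- `C` is a club of `κ`: a set of ordinals `< κ`, unbounded in `κ`, and closed: for
every nonempty `B ⊆ C` bounded below `κ`, `sup B ∈ C`. -/
def IsClubIn (C : Set Ordinal.{0}) (κo : Ordinal.{0}) : Prop :=
  (∀ α ∈ C, α < κo) ∧ (∀ α < κo, ∃ β ∈ C, α ≤ β) ∧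
    ∀ B ⊆ C, B.Nonempty → sSup B < κo → sSup B ∈ C

/-- Let `κ` be regular uncountable, `S ⊆ κ` a stationary set of limit ordinals, and for
`δ ∈ S` let `C_δ ⊆ δ` be unbounded in `δ`.  Then there is no `f : κ → κ` such that for
every `δ ∈ S` the set `{α ∈ C_δ : f α ≠ δ}` is bounded below `δ`. -/
theorem stmt14 (κ : Cardinal.{0}) (hreg : κ.IsRegular) (hunc : Cardinal.aleph0 < κ)
    (S : Set Ordinal.{0}) (hS : ∀ δ ∈ S, δ < κ.ord ∧ Order.IsSuccLimit δ)
    (hstat : ∀ Cl : Set Ordinal.{0}, IsClubIn Cl κ.ord → (S ∩ Cl).Nonempty)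
    (C : Ordinal.{0} → Set Ordinal.{0})
    (hC : ∀ δ ∈ S, (∀ α ∈ C δ, α < δ) ∧ ∀ α < δ, ∃ β ∈ C δ, α ≤ β) :
    ¬ ∃ f : Ordinal.{0} → Ordinal.{0}, (∀ α < κ.ord, f α < κ.ord) ∧
        ∀ δ ∈ S, ∃ γ < δ, ∀ α ∈ C δ, f α ≠ δ → α ≤ γ := by
  rintro ⟨f, hf, hfS⟩
  have hord : Order.IsSuccLimit κ.ord := Cardinal.isSuccLimit_ord hreg.aleph0_le
  -- the club of closure points of f
  set D : Set Ordinal.{0} := {β | β < κ.ord ∧ ∀ α < β, f α < β} with hD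
  have hDclub : IsClubIn D κ.ord := by
    refine ⟨fun α hα => hα.1, ?_, ?_⟩
    · -- unbounded
      intro α hα
      set g : Ordinal.{0} → Ordinal.{0} :=
        fun β => max (Ordinal.blsub β (fun x _ => f x)) (β + 1) with hg
      have hglt : ∀ i < κ.ord, g i < κ.ord := by
        intro i hi
        apply max_lt
        · exact Cardinal.blsub_lt_ord_of_isRegular hreg (Cardinal.lt_ord.1 hi) (fun x hx => hf x (hx.trans hi))
        · exact hord.succ_lt hi
      refine ⟨Ordinal.nfp g α, ⟨?_, ?_⟩, Ordinal.le_nfp g α⟩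
      · exact Cardinal.nfp_lt_ord_of_isRegular hreg hunc.ne' hglt hα
      · intro x hx
        obtain ⟨n, hn⟩ := Ordinal.lt_nfp_iff.1 hx
        have h1 : f x < g (g^[n] α) :=
          lt_of_lt_of_le (Ordinal.lt_blsub (fun x _ => f x) x hn) (le_max_left _ _)
        calc f x < g^[n+1] α := by rwa [Function.iterate_succ_apply']
          _ ≤ Ordinal.nfp g α := Ordinal.iterate_le_nfp g α (n+1)
    · -- closed
      rintro B hB ⟨b, hb⟩ hsup
      refine ⟨hsup, fun x hx => ?_⟩
      obtain ⟨c, hcB, hxc⟩ := exists_lt_of_lt_csSup ⟨b, hb⟩ hx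
      exact lt_of_lt_of_le ((hB hcB).2 x hxc)
        (le_csSup (Ordinal.bddAbove_iff_small.2 (small_subset
          (fun y hy => Set.mem_Iio.2 ((hB hy).1)))) hcB)
  obtain ⟨δ, hδS, hδD⟩ := hstat D hDclub
  obtain ⟨γ, hγδ, hγ⟩ := hfS δ hδS
  obtain ⟨hCsub, hCub⟩ := hC δ hδS
  have hlim := (hS δ hδS).2
  obtain ⟨β, hβC, hβ⟩ := hCub (γ + 1) (hlim.succ_lt hγδ)
  have hfβ : f β = δ := by
    by_contra h
    exact absurd (hγ β hβC h) (by simpa using (Order.succ_le_iff.1 hβ).not_ge)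
  exact absurd (hδD.2 β (hCsub β hβC)) (by rw [hfβ]; exact lt_irrefl δ)
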